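/- arXiv:1308.2860 — 6 statements merged into one kernel-verified Lean document; each statement's English description precedes it below -/
import Mathlib

section
/- Let f : ℝ^m → ℝ^m be a continuous open mapping and U ⊂ ℝ^m a bounded open set. Then f(T(U)) ⊆ T(f(U)), where T(E) denotes the union of a bounded set E with all bounded connected components of its complement. -/
open Set Metric Filter Bornology Topology

noncomputable section

/-- Components of closed sets are closed. -/
lemma isClosed_connectedComponentIn' {X : Type*} [TopologicalSpace X] {S : Set X}
    (hS : IsClosed S) (x : X) : IsClosed (connectedComponentIn S x) := by
  by_cases h : x ∈ S
  · rw [connectedComponentIn_eq_image h]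
    exact hS.isClosedEmbedding_subtypeVal.isClosed_iff_image_isClosed.1 isClosed_connectedComponent
  · rw [connectedComponentIn_eq_empty h]; exact isClosed_empty

/-- In a compact Hausdorff space, a connected component can be separated from a disjoint
closed set by a clopen set. -/
lemma exists_isClopen_of_disjoint' {X : Type*} [TopologicalSpace X] [CompactSpace X] [T2Space X]
    (x : X) {S : Set X} (hS : IsClosed S) (hd : Disjoint (connectedComponent x) S) :
    ∃ F : Set X, IsClopen F ∧ x ∈ F ∧ Disjoint F S := by
  rw [connectedComponent_eq_iInter_isClopen x] at hd
  have hd' : S ∩ ⋂ s : { s : Set X // IsClopen s ∧ x ∈ s }, (s : Set X) = ∅ := by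
    rw [inter_comm]
    exact disjoint_iff_inter_eq_empty.1 hd
  obtain ⟨t, ht⟩ := hS.isCompact.elim_finite_subfamily_closed
    (fun s : { s : Set X // IsClopen s ∧ x ∈ s } => (s : Set X)) (fun s => s.2.1.1) hd'
  refine ⟨⋂ i ∈ t, (i : Set X), isClopen_biInter_finset fun i _ => i.2.1,
    mem_iInter₂.2 fun i _ => i.2.2, Set.disjoint_left.2 fun a haF haS => ?_⟩
  exact (eq_empty_iff_forall_notMem.1 ht) a ⟨haS, haF⟩

/-- Relative version: a compact connected-component-in can be separated from a disjoint closed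
set by a set that is compact and relatively open in the ambient compact set. -/
lemma exists_relClopen' {X : Type*} [TopologicalSpace X] [T2Space X] {K : Set X}
    (hK : IsCompact K) {x : X} (hx : x ∈ K) {S : Set X} (hS : IsClosed S)
    (hd : Disjoint (connectedComponentIn K x) S) :
    ∃ V : Set X, IsOpen V ∧ IsClosed (K ∩ V) ∧ x ∈ V ∧ Disjoint (K ∩ V) S := by
  haveI : CompactSpace K := isCompact_iff_compactSpace.1 hK
  set x' : K := ⟨x, hx⟩
  have hS' : IsClosed (((↑) : K → X) ⁻¹' S) := hS.preimage continuous_subtype_val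
  have hd' : Disjoint (connectedComponent x') (((↑) : K → X) ⁻¹' S) := by
    refine Set.disjoint_left.2 fun z hz hzS => ?_
    have hmem : (z : X) ∈ connectedComponentIn K x := by
      rw [connectedComponentIn_eq_image hx]
      exact ⟨z, hz, rfl⟩
    exact Set.disjoint_left.1 hd hmem hzS
  obtain ⟨F, hF, hxF, hFS⟩ := exists_isClopen_of_disjoint' x' hS' hd'
  obtain ⟨V, hV, rfl⟩ := isOpen_induced_iff.1 hF.2
  have himg : ((↑) : K → X) '' (((↑) : K → X) ⁻¹' V) = K ∩ V := by
    rw [Subtype.image_preimage_coe]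
  refine ⟨V, hV, ?_, hxF, ?_⟩
  · rw [← himg]
    exact ((hF.1.isCompact).image continuous_subtype_val).isClosed
  · refine Set.disjoint_left.2 ?_
    rintro z ⟨hzK, hzV⟩ hzS
    exact Set.disjoint_left.1 hFS (show (⟨z, hzK⟩ : K) ∈ _ from hzV)
      (show (⟨z, hzK⟩ : K) ∈ _ from hzS)

/-- The topological hull `T(E)`: the union of `E` with all bounded connected
components of its complement. -/
def topHull {m : ℕ} (E : Set (EuclideanSpace ℝ (Fin m))) : Set (EuclideanSpace ℝ (Fin m)) :=
  E ∪ {x | IsBounded (connectedComponentIn Eᶜ x)}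

theorem hull_image_subset {m : ℕ} (f : EuclideanSpace ℝ (Fin m) → EuclideanSpace ℝ (Fin m))
    (hf : Continuous f) (hopen : IsOpenMap f) (U : Set (EuclideanSpace ℝ (Fin m)))
    (hU : IsOpen U) (hUb : IsBounded U) :
    f '' topHull U ⊆ topHull (f '' U) := by
  rintro _ ⟨x, hx, rfl⟩
  by_cases hfx : f x ∈ f '' U
  · exact Or.inl hfx
  right
  -- `x ∉ U`, and the component of `x` in `Uᶜ` is bounded.
  have hxU : x ∉ U := fun h => hfx ⟨x, h, rfl⟩
  have hC : IsBounded (connectedComponentIn Uᶜ x) := by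
    rcases hx with h | h
    · exact absurd h hxU
    · exact h
  set D := connectedComponentIn (f '' U)ᶜ (f x) with hD
  show IsBounded D
  have hfU_open : IsOpen (f '' U) := hopen U hU
  have hD_closed : IsClosed D := isClosed_connectedComponentIn' hfU_open.isClosed_compl _
  set Z := f ⁻¹' D with hZdef
  have hZ_closed : IsClosed Z := hD_closed.preimage hf
  have hZU : Z ⊆ Uᶜ := by
    intro z hz hzU
    exact (connectedComponentIn_subset _ _ hz) ⟨z, hzU, rfl⟩
  have hxZ : x ∈ Z := mem_connectedComponentIn hfx
  have hCz : IsBounded (connectedComponentIn Z x) :=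
    hC.subset (connectedComponentIn_mono x hZU)
  obtain ⟨r, hr⟩ := hCz.subset_closedBall 0
  set R : ℝ := |r| + 1 with hRdef
  have hrR : closedBall (0 : EuclideanSpace ℝ (Fin m)) r ⊆ ball 0 R :=
    closedBall_subset_ball (by
      have := abs_nonneg r
      have := le_abs_self r
      linarith)
  have hCzb : connectedComponentIn Z x ⊆ ball 0 R := hr.trans hrR
  set K := Z ∩ closedBall (0 : EuclideanSpace ℝ (Fin m)) R with hKdef
  have hK : IsCompact K := (isCompact_closedBall 0 R).inter_left hZ_closed
  have hxK : x ∈ K :=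
    ⟨hxZ, ball_subset_closedBall (hCzb (mem_connectedComponentIn hxZ))⟩
  have hccK : connectedComponentIn K x = connectedComponentIn Z x := by
    apply Subset.antisymm (connectedComponentIn_mono x inter_subset_left)
    exact isPreconnected_connectedComponentIn.subset_connectedComponentIn
      (mem_connectedComponentIn hxZ)
      (subset_inter (connectedComponentIn_subset _ _) (hCzb.trans ball_subset_closedBall))
  have hdisj : Disjoint (connectedComponentIn K x) (sphere (0 : EuclideanSpace ℝ (Fin m)) R) := by
    rw [hccK]
    refine Set.disjoint_left.2 fun z hz hzs => ?_
    have h1 : dist z 0 < R := mem_ball.1 (hCzb hz)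
    have h2 : dist z 0 = R := mem_sphere.1 hzs
    linarith
  obtain ⟨V, hV, hKV_closed, hxV, hKVS⟩ := exists_relClopen' hK hxK isClosed_sphere hdisj
  set W := V ∩ ball (0 : EuclideanSpace ℝ (Fin m)) R with hWdef
  have hW : IsOpen W := hV.inter isOpen_ball
  have hFW : K ∩ V = Z ∩ W := by
    apply Subset.antisymm
    · rintro z ⟨⟨hzZ, hzB⟩, hzV⟩
      refine ⟨hzZ, hzV, ?_⟩
      rcases lt_or_eq_of_le (mem_closedBall.1 hzB) with h | h
      · exact mem_ball.2 h
      · exact absurd (mem_sphere.2 h) (Set.disjoint_left.1 hKVS ⟨⟨hzZ, hzB⟩, hzV⟩)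
    · rintro z ⟨hzZ, hzV, hzB⟩
      exact ⟨⟨hzZ, ball_subset_closedBall hzB⟩, hzV⟩
  set F := Z ∩ W with hFdef
  have hF_compact : IsCompact F := hK.of_isClosed_subset (hFW ▸ hKV_closed)
    (inter_subset_inter_right Z (hWdef ▸ (inter_subset_right.trans ball_subset_closedBall)))
  have hxF : x ∈ F := hFW ▸ (⟨hxK, hxV⟩ : x ∈ K ∩ V)
  -- `f '' F` is a nonempty clopen subset of the preconnected set `D`, so `D ⊆ f '' F`.
  have hFZ : F ⊆ Z := inter_subset_left
  have hA_eq : f '' F = D ∩ f '' W := by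
    apply Subset.antisymm
    · rintro _ ⟨w, hw, rfl⟩
      exact ⟨hFZ hw, w, hw.2, rfl⟩
    · rintro _ ⟨hd, w, hw, rfl⟩
      exact ⟨w, ⟨hd, hw⟩, rfl⟩
  have hAD : f '' F ⊆ D := fun _ h => (hA_eq ▸ h).1
  have hDpre : IsPreconnected D := isPreconnected_connectedComponentIn
  haveI : PreconnectedSpace D := Subtype.preconnectedSpace hDpre
  have hclopen : IsClopen (((↑) : D → EuclideanSpace ℝ (Fin m)) ⁻¹' (f '' F)) := by
    constructor
    · exact ((hF_compact.image hf).isClosed).preimage continuous_subtype_val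
    · have : ((↑) : D → EuclideanSpace ℝ (Fin m)) ⁻¹' (f '' F)
          = ((↑) : D → EuclideanSpace ℝ (Fin m)) ⁻¹' (f '' W) := by
        ext z
        simp only [mem_preimage, hA_eq, mem_inter_iff]
        exact ⟨fun h => h.2, fun h => ⟨z.2, h⟩⟩
      rw [this]
      exact (hopen W hW).preimage continuous_subtype_val
  have hne : (((↑) : D → EuclideanSpace ℝ (Fin m)) ⁻¹' (f '' F)).Nonempty :=
    ⟨⟨f x, mem_connectedComponentIn hfx⟩, ⟨x, hxF, rfl⟩⟩
  have huniv := hclopen.eq_univ hne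
  have hDA : D ⊆ f '' F := by
    intro z hz
    have : (⟨z, hz⟩ : D) ∈ ((↑) : D → EuclideanSpace ℝ (Fin m)) ⁻¹' (f '' F) := by
      rw [huniv]; trivial
    exact this
  exact ((hF_compact.image hf).isBounded).subset hDA
end
end

section
/- Let f : ℝ^m → ℝ^m be a continuous open mapping and U ⊂ ℝ^m a bounded open set. Then ∂T(f(U)) ⊆ f(∂T(U)), where T denotes the topological hull. -/
open Set Metric Filter Bornology Topology

noncomputable section

/-- Šura-Bura type lemma: in a compact Hausdorff space, if the connected component of `x`
is contained in an open set `V`, there is a clopen set between them. -/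
theorem exists_isClopen_mem_subset {α : Type*} [TopologicalSpace α] [CompactSpace α] [T2Space α]
    {x : α} {V : Set α} (hV : IsOpen V) (h : connectedComponent x ⊆ V) :
    ∃ Q : Set α, IsClopen Q ∧ x ∈ Q ∧ Q ⊆ V := by
  have hcc := connectedComponent_eq_iInter_isClopen x
  have hVc : IsCompact Vᶜ := hV.isClosed_compl.isCompact
  have hcover : Vᶜ ⊆ ⋃ Z : { Z : Set α // IsClopen Z ∧ x ∈ Z }, (Z : Set α)ᶜ := by
    intro a ha
    by_contra hcontra
    simp only [mem_iUnion, mem_compl_iff, not_exists, not_not] at hcontra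
    have haC : a ∈ connectedComponent x := by
      rw [hcc]; exact mem_iInter.mpr fun Z => hcontra Z
    exact ha (h haC)
  obtain ⟨t, ht⟩ := hVc.elim_finite_subcover _
    (fun Z : { Z : Set α // IsClopen Z ∧ x ∈ Z } => Z.2.1.compl.isOpen) hcover
  refine ⟨⋂ Z ∈ t, (Z : Set α), ?_, ?_, ?_⟩
  · exact isClopen_biInter_finset fun Z _ => Z.2.1
  · exact mem_iInter₂.mpr fun Z _ => Z.2.2
  · intro q hq
    by_contra hqV
    rcases mem_iUnion.mp (ht hqV) with ⟨Z, hZ⟩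
    rcases mem_iUnion.mp hZ with ⟨hZt, hqZ⟩
    exact hqZ (mem_iInter₂.mp hq Z hZt)

namespace TopHullAux

variable {m : ℕ}

/-- A point outside a ball containing `E` has an unbounded connected component in `Eᶜ`. -/
theorem unbounded_comp_of_far {E : Set (EuclideanSpace ℝ (Fin m))} {R : ℝ} (hR : 0 ≤ R)
    (hE : E ⊆ ball 0 R) {z : EuclideanSpace ℝ (Fin m)} (hz : R < ‖z‖) :
    ¬ IsBounded (connectedComponentIn Eᶜ z) := by
  intro hb
  set L : Set (EuclideanSpace ℝ (Fin m)) := (fun t : ℝ => t • z) '' Ici 1 with hL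
  have hzL : z ∈ L := ⟨1, mem_Ici.mpr le_rfl, one_smul ℝ z⟩
  have hnorm : ∀ t : ℝ, 1 ≤ t → ‖t • z‖ = t * ‖z‖ := by
    intro t ht
    rw [norm_smul, Real.norm_eq_abs, abs_of_pos (lt_of_lt_of_le zero_lt_one ht)]
  have hLE : L ⊆ Eᶜ := by
    rintro _ ⟨t, ht, rfl⟩
    intro hmem
    have h1 := hE hmem
    rw [mem_ball_zero_iff] at h1
    have : R < ‖t • z‖ := by
      rw [hnorm t ht]
      calc R < ‖z‖ := hz
        _ = 1 * ‖z‖ := (one_mul _).symm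
        _ ≤ t * ‖z‖ := by
          apply mul_le_mul_of_nonneg_right ht (norm_nonneg z)
    linarith
  have hLpre : IsPreconnected L := by
    apply IsPreconnected.image isPreconnected_Ici
    exact (continuous_id.smul continuous_const).continuousOn
  have hLsub : L ⊆ connectedComponentIn Eᶜ z :=
    hLpre.subset_connectedComponentIn hzL hLE
  have hLb : IsBounded L := hb.subset hLsub
  rw [isBounded_iff_forall_norm_le] at hLb
  obtain ⟨C, hC⟩ := hLb
  have hznorm : 0 < ‖z‖ := lt_of_le_of_lt hR hz
  set t₀ : ℝ := max 1 ((C + 1) / ‖z‖) with ht₀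
  have h1t : (1:ℝ) ≤ t₀ := le_max_left _ _
  have ht₀L : t₀ • z ∈ L := ⟨t₀, h1t, rfl⟩
  have := hC _ ht₀L
  rw [hnorm t₀ h1t] at this
  have h2 : (C + 1) / ‖z‖ ≤ t₀ := le_max_right _ _
  have h3 : C + 1 ≤ t₀ * ‖z‖ := by
    rw [div_le_iff₀ hznorm] at h2
    linarith
  linarith

theorem topHull_subset_closedBall {E : Set (EuclideanSpace ℝ (Fin m))} {R : ℝ} (hR : 0 ≤ R)
    (hE : E ⊆ ball 0 R) : topHull E ⊆ closedBall 0 R := by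
  intro z hz
  by_contra hzB
  rw [mem_closedBall_zero_iff, not_le] at hzB
  rcases hz with hz | hz
  · have := hE hz
    rw [mem_ball_zero_iff] at this
    linarith
  · exact unbounded_comp_of_far hR hE hzB hz

theorem isBounded_topHull {E : Set (EuclideanSpace ℝ (Fin m))} (hE : IsBounded E) :
    IsBounded (topHull E) := by
  obtain ⟨R, hR0, hER⟩ := hE.subset_ball_lt 0 0
  exact (isBounded_closedBall (x := (0:EuclideanSpace ℝ (Fin m))) (r := R)).subset
    (topHull_subset_closedBall hR0.le hER)

theorem subset_topHull (E : Set (EuclideanSpace ℝ (Fin m))) : E ⊆ topHull E :=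
  subset_union_left

/-- `topHull U` is open when `U` is open and bounded. -/
theorem isOpen_topHull {U : Set (EuclideanSpace ℝ (Fin m))} (hU : IsOpen U)
    (hUb : IsBounded U) : IsOpen (topHull U) := by
  rw [isOpen_iff_forall_mem_open]
  intro x₀ hx₀
  by_cases hxU : x₀ ∈ U
  · exact ⟨U, subset_topHull U, hU, hxU⟩
  -- x₀ lies in a bounded component D of Uᶜ
  have hxc : x₀ ∈ Uᶜ := hxU
  have hD : IsBounded (connectedComponentIn Uᶜ x₀) := by
    rcases hx₀ with h | h
    · exact absurd h hxU
    · exact h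
  set D := connectedComponentIn Uᶜ x₀ with hDdef
  obtain ⟨R, hR0, hballR⟩ := (hUb.union hD).subset_ball_lt 0 0
  have hUR : U ⊆ ball 0 R := (subset_union_left).trans hballR
  have hDR : D ⊆ ball 0 R := (subset_union_right).trans hballR
  set S : Set (EuclideanSpace ℝ (Fin m)) := Uᶜ ∩ closedBall 0 R with hSdef
  have hScl : IsClosed S := (hU.isClosed_compl).inter isClosed_closedBall
  have hScpt : IsCompact S :=
    isCompact_of_isClosed_isBounded hScl ((isBounded_closedBall).subset inter_subset_right)
  have hx₀S : x₀ ∈ S := ⟨hxc, ball_subset_closedBall (hDR (mem_connectedComponentIn hxc))⟩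
  haveI : CompactSpace S := isCompact_iff_compactSpace.mp hScpt
  -- the component of x₀ in the subtype S maps into D ⊆ ball 0 R
  have hcompsub : ∀ s : S, s ∈ connectedComponent (⟨x₀, hx₀S⟩ : S) →
      (s : EuclideanSpace ℝ (Fin m)) ∈ D := by
    intro s hs
    have h1 : (Subtype.val '' connectedComponent (⟨x₀, hx₀S⟩ : S)) ⊆ D := by
      have hpre : IsPreconnected (Subtype.val '' connectedComponent (⟨x₀, hx₀S⟩ : S)) :=
        isPreconnected_connectedComponent.image _ continuous_subtype_val.continuousOn
      have hsubc : (Subtype.val '' connectedComponent (⟨x₀, hx₀S⟩ : S)) ⊆ Uᶜ := by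
        rintro _ ⟨a, _, rfl⟩; exact a.2.1
      exact hpre.subset_connectedComponentIn
        ⟨⟨x₀, hx₀S⟩, mem_connectedComponent, rfl⟩ hsubc
    exact h1 ⟨s, hs, rfl⟩
  have hcompV : connectedComponent (⟨x₀, hx₀S⟩ : S) ⊆ Subtype.val ⁻¹' (ball 0 R) := by
    intro s hs; exact hDR (hcompsub s hs)
  obtain ⟨Q, hQclopen, hxQ, hQV⟩ := exists_isClopen_mem_subset
    (isOpen_ball.preimage continuous_subtype_val) hcompV
  -- express the clopen Q as S ∩ O with O open
  obtain ⟨O, hOopen, hOQ⟩ := isOpen_induced_iff.mp hQclopen.isOpen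
  set O₂ : Set (EuclideanSpace ℝ (Fin m)) := O ∩ ball 0 R with hO₂def
  have hO₂open : IsOpen O₂ := hOopen.inter isOpen_ball
  set Qv : Set (EuclideanSpace ℝ (Fin m)) := Subtype.val '' Q with hQvdef
  have hQv_eq : Qv = Uᶜ ∩ O₂ := by
    apply Subset.antisymm
    · rintro _ ⟨q, hq, rfl⟩
      refine ⟨q.2.1, ?_, hQV hq⟩
      have : q ∈ Subtype.val ⁻¹' O := by rw [hOQ]; exact hq
      exact this
    · rintro b ⟨hbU, hbO, hbB⟩
      have hbS : b ∈ S := ⟨hbU, ball_subset_closedBall hbB⟩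
      refine ⟨⟨b, hbS⟩, ?_, rfl⟩
      rw [← hOQ]; exact hbO
  have hQvcpt : IsCompact Qv := by
    have : IsCompact Q := hQclopen.isClosed.isCompact
    exact this.image continuous_subtype_val
  have hx₀O₂ : x₀ ∈ O₂ := by
    have : x₀ ∈ Qv := ⟨⟨x₀, hx₀S⟩, hxQ, rfl⟩
    rw [hQv_eq] at this; exact this.2
  refine ⟨O₂, ?_, hO₂open, hx₀O₂⟩
  -- O₂ ⊆ topHull U
  intro w hw
  by_cases hwU : w ∈ U
  · exact Or.inl hwU
  · right
    have hwQv : w ∈ Qv := by rw [hQv_eq]; exact ⟨hwU, hw⟩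
    show IsBounded (connectedComponentIn Uᶜ w)
    set Aw := connectedComponentIn Uᶜ w with hAwdef
    have hAwpre : IsPreconnected Aw := isPreconnected_connectedComponentIn
    have hAwsub : Aw ⊆ Uᶜ := connectedComponentIn_subset _ _
    have hwAw : w ∈ Aw := mem_connectedComponentIn hwU
    -- Aw is preconnected, meets Qv, and Qv is clopen in Uᶜ; so Aw ⊆ Qv
    have hAwQv : Aw ⊆ Qv := by
      by_contra hnot
      have hcover : Aw ⊆ O₂ ∪ Qvᶜ := by
        intro a ha
        by_cases haQ : a ∈ Qv
        · left; rw [hQv_eq] at haQ; exact haQ.2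
        · right; exact haQ
      have hne1 : (Aw ∩ O₂).Nonempty := ⟨w, hwAw, hw⟩
      have hne2 : (Aw ∩ Qvᶜ).Nonempty := by
        rcases not_subset.mp hnot with ⟨a, ha, hna⟩
        exact ⟨a, ha, hna⟩
      have hdisj : (Aw ∩ (O₂ ∩ Qvᶜ)) = ∅ := by
        ext a
        simp only [mem_inter_iff, mem_compl_iff, mem_empty_iff_false, iff_false]
        rintro ⟨haAw, haO₂, haQv⟩
        exact haQv (by rw [hQv_eq]; exact ⟨hAwsub haAw, haO₂⟩)
      have := hAwpre O₂ Qvᶜ hO₂open hQvcpt.isClosed.isOpen_compl hcover hne1 hne2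
      rw [hdisj] at this
      exact not_nonempty_empty this
    exact hQvcpt.isBounded.subset hAwQv

/-- Main lemma: an open continuous map sends the hull into the hull of the image. -/
theorem image_topHull_subset {f : EuclideanSpace ℝ (Fin m) → EuclideanSpace ℝ (Fin m)}
    (hf : Continuous f) (hopen : IsOpenMap f) {U : Set (EuclideanSpace ℝ (Fin m))}
    (hU : IsOpen U) (hUb : IsBounded U) :
    f '' topHull U ⊆ topHull (f '' U) := by
  rintro _ ⟨p, hp, rfl⟩
  by_cases hz : f p ∈ f '' U
  · exact Or.inl hz
  right
  show IsBounded (connectedComponentIn (f '' U)ᶜ (f p))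
  by_contra hA
  set A := connectedComponentIn (f '' U)ᶜ (f p) with hAdef
  have hzc : f p ∈ (f '' U)ᶜ := hz
  have hzA : f p ∈ A := mem_connectedComponentIn hzc
  have hAsub : A ⊆ (f '' U)ᶜ := connectedComponentIn_subset _ _
  have hApre : IsPreconnected A := isPreconnected_connectedComponentIn
  have hAclosed : IsClosed A := by
    have h1 : closure A ⊆ (f '' U)ᶜ := by
      apply closure_minimal hAsub
      exact (hopen U hU).isClosed_compl
    have h2 : closure A ⊆ A :=
      (isPreconnected_connectedComponentIn.closure).subset_connectedComponentIn
        (subset_closure hzA) h1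
    exact isClosed_of_closure_subset h2
  -- G = topHull U and its closure
  set G := topHull U with hGdef
  have hGopen : IsOpen G := isOpen_topHull hU hUb
  have hGb : IsBounded G := isBounded_topHull hUb
  have hpU : p ∉ U := fun h => hz ⟨p, h, rfl⟩
  have hDb : IsBounded (connectedComponentIn Uᶜ p) := by
    rcases hp with h | h
    · exact absurd h hpU
    · exact h
  set S : Set (EuclideanSpace ℝ (Fin m)) := f ⁻¹' A ∩ closure G with hSdef
  have hScl : IsClosed S := (hAclosed.preimage hf).inter isClosed_closure
  have hScpt : IsCompact S :=
    isCompact_of_isClosed_isBounded hScl (hGb.closure.subset inter_subset_right)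
  have hSU : ∀ s ∈ S, s ∉ U := by
    rintro s ⟨hs1, _⟩ hsU
    exact hAsub hs1 ⟨s, hsU, rfl⟩
  have hpS : p ∈ S := ⟨hzA, subset_closure hp⟩
  haveI : CompactSpace S := isCompact_iff_compactSpace.mp hScpt
  set N := connectedComponent (⟨p, hpS⟩ : S) with hNdef
  by_cases hcase : ∀ s ∈ N, (s : EuclideanSpace ℝ (Fin m)) ∈ G
  · -- Šura-Bura case: find clopen Q with N ⊆ Q ⊆ {val ∈ G}
    have hVopen : IsOpen (Subtype.val ⁻¹' G : Set S) := hGopen.preimage continuous_subtype_val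
    obtain ⟨Q, hQclopen, hpQ, hQV⟩ := exists_isClopen_mem_subset hVopen hcase
    obtain ⟨O, hOopen, hOQ⟩ := isOpen_induced_iff.mp hQclopen.isOpen
    set O₂ : Set (EuclideanSpace ℝ (Fin m)) := O ∩ G with hO₂def
    have hO₂open : IsOpen O₂ := hOopen.inter hGopen
    set Qv : Set (EuclideanSpace ℝ (Fin m)) := Subtype.val '' Q with hQvdef
    have hQv_eq : Qv = f ⁻¹' A ∩ O₂ := by
      apply Subset.antisymm
      · rintro _ ⟨q, hq, rfl⟩
        refine ⟨q.2.1, ?_, hQV hq⟩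
        have : q ∈ Subtype.val ⁻¹' O := by rw [hOQ]; exact hq
        exact this
      · rintro b ⟨hbA, hbO, hbG⟩
        have hbS : b ∈ S := ⟨hbA, subset_closure hbG⟩
        refine ⟨⟨b, hbS⟩, ?_, rfl⟩
        rw [← hOQ]; exact hbO
    have hQvcpt : IsCompact Qv :=
      (hQclopen.isClosed.isCompact).image continuous_subtype_val
    have hfQv : f '' Qv ⊆ A := by
      rintro _ ⟨q, hq, rfl⟩
      rw [hQv_eq] at hq; exact hq.1
    have hzQv : f p ∈ f '' Qv := ⟨p, ⟨⟨p, hpS⟩, hpQ, rfl⟩, rfl⟩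
    have hkey : A ∩ (f '' O₂) = f '' Qv := by
      apply Subset.antisymm
      · rintro a ⟨haA, b, hbO₂, rfl⟩
        exact ⟨b, by rw [hQv_eq]; exact ⟨haA, hbO₂⟩, rfl⟩
      · rintro _ ⟨q, hq, rfl⟩
        rw [hQv_eq] at hq
        exact ⟨hq.1, q, hq.2, rfl⟩
    -- A is preconnected, f '' Qv is nonempty clopen-in-A, A unbounded: contradiction
    have hcover : A ⊆ (f '' O₂) ∪ (f '' Qv)ᶜ := by
      intro a ha
      by_cases haQ : a ∈ f '' Qv
      · left
        rw [← hkey] at haQ; exact haQ.2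
      · right; exact haQ
    have hne1 : (A ∩ f '' O₂).Nonempty := by
      refine ⟨f p, hzA, ?_⟩
      rw [hkey] at *
      rcases hzQv with ⟨q, hq, hfq⟩
      rw [hQv_eq] at hq
      exact ⟨q, hq.2, hfq⟩
    have hne2 : (A ∩ (f '' Qv)ᶜ).Nonempty := by
      have hnsub : ¬ A ⊆ f '' Qv :=
        fun hsub => hA (((hQvcpt.image hf).isBounded).subset hsub)
      rcases not_subset.mp hnsub with ⟨a, ha, hna⟩
      exact ⟨a, ha, hna⟩
    have hdisj : (A ∩ ((f '' O₂) ∩ (f '' Qv)ᶜ)) = ∅ := by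
      ext a
      simp only [mem_inter_iff, mem_compl_iff, mem_empty_iff_false, iff_false]
      rintro ⟨haA, haO, haQ⟩
      exact haQ (by rw [← hkey]; exact ⟨haA, haO⟩)
    have := hApre (f '' O₂) (f '' Qv)ᶜ (hopen _ hO₂open)
      ((hQvcpt.image hf).isClosed.isOpen_compl) hcover hne1 hne2
    rw [hdisj] at this
    exact not_nonempty_empty this
  · -- a point of N escapes G : contradiction with boundedness of the component of p
    push_neg at hcase
    obtain ⟨s, hsN, hsG⟩ := hcase
    have hNv : (Subtype.val '' N) ⊆ connectedComponentIn Uᶜ p := by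
      have hpre : IsPreconnected (Subtype.val '' N) :=
        isPreconnected_connectedComponent.image _ continuous_subtype_val.continuousOn
      have hsubc : (Subtype.val '' N) ⊆ Uᶜ := by
        rintro _ ⟨a, haN, rfl⟩
        exact hSU a a.2
      exact hpre.subset_connectedComponentIn ⟨⟨p, hpS⟩, mem_connectedComponent, rfl⟩ hsubc
    have hsD : (s : EuclideanSpace ℝ (Fin m)) ∈ connectedComponentIn Uᶜ p :=
      hNv ⟨s, hsN, rfl⟩
    have heq : connectedComponentIn Uᶜ p = connectedComponentIn Uᶜ (s : EuclideanSpace ℝ (Fin m)) :=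
      connectedComponentIn_eq hsD
    apply hsG
    right
    show IsBounded (connectedComponentIn Uᶜ (s : EuclideanSpace ℝ (Fin m)))
    rw [← heq]
    exact hDb

end TopHullAux

theorem frontier_hull_image_subset {m : ℕ}
    (f : EuclideanSpace ℝ (Fin m) → EuclideanSpace ℝ (Fin m))
    (hf : Continuous f) (hopen : IsOpenMap f) (U : Set (EuclideanSpace ℝ (Fin m)))
    (hU : IsOpen U) (hUb : IsBounded U) :
    frontier (topHull (f '' U)) ⊆ f '' frontier (topHull U) := by
  intro y hy
  set W := topHull (f '' U) with hWdef
  have hfUopen : IsOpen (f '' U) := hopen U hU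
  have hynotint : y ∉ interior W := hy.2
  have hyclW : y ∈ closure W := hy.1
  -- Step 1: y ∈ closure (f '' U) and y ∉ f '' U
  have hynotfU : y ∉ f '' U := fun h =>
    hynotint (interior_maximal (TopHullAux.subset_topHull _) hfUopen h)
  have hyclfU : y ∈ closure (f '' U) := by
    by_contra hnot
    have : y ∈ (closure (f '' U))ᶜ := hnot
    obtain ⟨ε, hε, hball⟩ := Metric.isOpen_iff.mp isClosed_closure.isOpen_compl y this
    have hBfU : ball y ε ∩ (f '' U) = ∅ := by
      ext b
      simp only [mem_inter_iff, mem_empty_iff_false, iff_false]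
      rintro ⟨hb1, hb2⟩
      exact (hball hb1) (subset_closure hb2)
    have hBc : ball y ε ⊆ (f '' U)ᶜ := fun b hb hbf => by
      rw [← mem_empty_iff_false b, ← hBfU]; exact ⟨hb, hbf⟩
    have hyc : y ∈ (f '' U)ᶜ := hBc (mem_ball_self hε)
    have hBpre : IsPreconnected (ball y ε) :=
      ((convex_ball y ε).isPathConnected (nonempty_ball.mpr hε)).isConnected.isPreconnected
    have hBsub : ball y ε ⊆ connectedComponentIn (f '' U)ᶜ y :=
      hBpre.subset_connectedComponentIn (mem_ball_self hε) hBc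
    by_cases hCy : IsBounded (connectedComponentIn (f '' U)ᶜ y)
    · -- then the whole ball is in W, so y ∈ interior W, contradiction
      apply hynotint
      apply interior_maximal _ isOpen_ball (mem_ball_self hε)
      intro b hb
      right
      show IsBounded (connectedComponentIn (f '' U)ᶜ b)
      rw [← connectedComponentIn_eq (hBsub hb)]
      exact hCy
    · -- then the ball misses W, so y ∉ closure W, contradiction
      have hBW : ball y ε ∩ W = ∅ := by
        ext b
        simp only [mem_inter_iff, mem_empty_iff_false, iff_false]
        rintro ⟨hb, hbW⟩
        rcases hbW with h | h
        · rw [← mem_empty_iff_false b, ← hBfU]; exact ⟨hb, h⟩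
        · apply hCy
          rw [connectedComponentIn_eq (hBsub hb)]
          exact h
      rw [_root_.mem_closure_iff] at hyclW
      obtain ⟨w, hw1, hw2⟩ := hyclW (ball y ε) isOpen_ball (mem_ball_self hε)
      rw [← mem_empty_iff_false w, ← hBW]; exact ⟨hw1, hw2⟩
  -- Step 2: y ∈ f '' closure U
  have hUccpt : IsCompact (closure U) := hUb.isCompact_closure
  have hclfU : closure (f '' U) ⊆ f '' closure U := by
    apply closure_minimal (image_mono subset_closure)
    exact (hUccpt.image hf).isClosed
  obtain ⟨x, hxclU, hxy⟩ := hclfU hyclfU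
  -- Step 3: x ∈ closure (topHull U); split on membership in topHull U
  have hxclG : x ∈ closure (topHull U) :=
    closure_mono (TopHullAux.subset_topHull U) hxclU
  by_cases hxG : x ∈ topHull U
  · -- y ∈ f '' topHull U ⊆ W, and f '' topHull U is open: contradiction
    exfalso
    apply hynotint
    apply interior_maximal (TopHullAux.image_topHull_subset hf hopen hU hUb)
      (hopen _ (TopHullAux.isOpen_topHull hU hUb))
    exact hxy ▸ ⟨x, hxG, rfl⟩
  · refine ⟨x, ?_, hxy⟩
    rw [(TopHullAux.isOpen_topHull hU hUb).frontier_eq]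
    exact ⟨hxclG, hxG⟩
end
end

section
/- Let E be a closed connected subset of the one-point compactification of ℝ^m containing the point at infinity. Then every connected component of E ∩ ℝ^m is unbounded. -/
open Set Metric Filter Bornology Topology OnePoint

noncomputable section

theorem exists_isClopen_disjoint' {X : Type*} [TopologicalSpace X] [T2Space X] [CompactSpace X]
    (x : X) {F : Set X} (hF : IsClosed F) (hd : connectedComponent x ∩ F = ∅) :
    ∃ Z : Set X, IsClopen Z ∧ x ∈ Z ∧ Z ∩ F = ∅ := by
  haveI : Nonempty {s : Set X // IsClopen s ∧ x ∈ s} := ⟨⟨univ, isClopen_univ, mem_univ x⟩⟩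
  obtain ⟨Z, hZ⟩ := hF.isCompact.elim_directed_family_closed
    (fun s : {s : Set X // IsClopen s ∧ x ∈ s} => s.1)
    (fun s => s.2.1.1)
    (by
      rw [← connectedComponent_eq_iInter_isClopen, inter_comm]
      exact hd)
    (fun s t => ⟨⟨s.1 ∩ t.1, s.2.1.inter t.2.1, s.2.2, t.2.2⟩, inter_subset_left,
      inter_subset_right⟩)
  exact ⟨Z.1, Z.2.1, Z.2.2, by rw [inter_comm]; exact hZ⟩

theorem components_unbounded {m : ℕ}
    (E : Set (OnePoint (EuclideanSpace ℝ (Fin m))))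
    (hEc : IsClosed E) (hEconn : IsConnected E)
    (hinf : (∞ : OnePoint (EuclideanSpace ℝ (Fin m))) ∈ E)
    (x : EuclideanSpace ℝ (Fin m)) (hx : (x : OnePoint (EuclideanSpace ℝ (Fin m))) ∈ E) :
    ¬ IsBounded (connectedComponentIn
      {y : EuclideanSpace ℝ (Fin m) | (y : OnePoint (EuclideanSpace ℝ (Fin m))) ∈ E} x) := by
  set S : Set (EuclideanSpace ℝ (Fin m)) :=
    {y : EuclideanSpace ℝ (Fin m) | (y : OnePoint (EuclideanSpace ℝ (Fin m))) ∈ E} with hS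
  set C := connectedComponentIn S x with hC
  intro hb
  have hxS : x ∈ S := hx
  have hxC : x ∈ C := mem_connectedComponentIn hxS
  have hSc : IsClosed S := hEc.preimage OnePoint.continuous_coe
  obtain ⟨r, hr⟩ := (isBounded_iff_subset_closedBall (0 : EuclideanSpace ℝ (Fin m))).mp hb
  set K : Set (EuclideanSpace ℝ (Fin m)) := S ∩ closedBall 0 (r + 1) with hK
  have hKS : K ⊆ S := inter_subset_left
  have hCK : C ⊆ K := subset_inter (connectedComponentIn_subset S x)
    (hr.trans (closedBall_subset_closedBall (by linarith)))
  have hxK : x ∈ K := hCK hxC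
  have hKcpt : IsCompact K := (isCompact_closedBall (0 : EuclideanSpace ℝ (Fin m))
    (r + 1)).inter_left hSc
  have hCeq : connectedComponentIn K x = C := by
    refine Subset.antisymm (connectedComponentIn_mono x hKS) ?_
    exact isPreconnected_connectedComponentIn.subset_connectedComponentIn hxC hCK
  haveI : CompactSpace K := isCompact_iff_compactSpace.mp hKcpt
  have himg : Subtype.val '' connectedComponent (⟨x, hxK⟩ : K) = C := by
    rw [← connectedComponentIn_eq_image hxK, hCeq]
  obtain ⟨Z, hZcl, hxZ, hZF⟩ := exists_isClopen_disjoint' (⟨x, hxK⟩ : K)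
    (F := Subtype.val ⁻¹' (ball (0 : EuclideanSpace ℝ (Fin m)) (r + 1))ᶜ)
    (isOpen_ball.isClosed_compl.preimage continuous_subtype_val)
    (by
      rw [eq_empty_iff_forall_notMem]
      rintro y ⟨hy1, hy2⟩
      have h1 : (y : EuclideanSpace ℝ (Fin m)) ∈ C := himg ▸ mem_image_of_mem _ hy1
      exact hy2 (closedBall_subset_ball (by linarith) (hr h1)))
  -- V : the clopen piece, as a subset of euclidean space
  set V : Set (EuclideanSpace ℝ (Fin m)) := Subtype.val '' Z with hV
  have hxV : x ∈ V := ⟨⟨x, hxK⟩, hxZ, rfl⟩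
  have hVball : V ⊆ ball (0 : EuclideanSpace ℝ (Fin m)) (r + 1) := by
    rintro _ ⟨y, hy, rfl⟩
    by_contra h
    exact (eq_empty_iff_forall_notMem.mp hZF) y ⟨hy, h⟩
  have hVcpt : IsCompact V := (hZcl.1.isCompact).image continuous_subtype_val
  -- V is open in S : V = S ∩ W for an open W
  obtain ⟨O, hO, hZO⟩ := isOpen_induced_iff.mp hZcl.2
  have hVKO : V = K ∩ O := by
    rw [hV, ← hZO, Subtype.image_preimage_coe]
  have hVSW : V = S ∩ (O ∩ ball (0 : EuclideanSpace ℝ (Fin m)) (r + 1)) := by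
    apply Subset.antisymm
    · intro y hy
      exact ⟨hKS (hVKO ▸ hy).1, (hVKO ▸ hy).2, hVball hy⟩
    · rintro y ⟨hyS, hyO, hyb⟩
      rw [hVKO]
      exact ⟨⟨hyS, ball_subset_closedBall hyb⟩, hyO⟩
  -- move to the one-point compactification
  set W := O ∩ ball (0 : EuclideanSpace ℝ (Fin m)) (r + 1) with hWdef
  have hWo : IsOpen W := hO.inter isOpen_ball
  set A : Set (OnePoint (EuclideanSpace ℝ (Fin m))) :=
    ((↑) : EuclideanSpace ℝ (Fin m) → OnePoint (EuclideanSpace ℝ (Fin m))) '' V with hA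
  have hAcpt : IsCompact A := hVcpt.image OnePoint.continuous_coe
  set U := ((↑) : EuclideanSpace ℝ (Fin m) → OnePoint (EuclideanSpace ℝ (Fin m))) '' W with hU
  have hUo : IsOpen U := OnePoint.isOpenEmbedding_coe.isOpenMap W hWo
  have hAEU : A = E ∩ U := by
    apply Subset.antisymm
    · rintro _ ⟨y, hy, rfl⟩
      have h2 : y ∈ S ∩ W := hVSW ▸ hy
      exact ⟨h2.1, mem_image_of_mem _ h2.2⟩
    · rintro z ⟨hzE, w, hw, rfl⟩
      have h2 : w ∈ V := hVSW ▸ (⟨hzE, hw⟩ : w ∈ S ∩ W)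
      exact mem_image_of_mem _ h2
  set B := E \ A with hB
  have hBc : IsClosed B := by
    have : B = E ∩ Uᶜ := by
      rw [hB, hAEU]
      ext z
      simp only [mem_diff, mem_inter_iff, mem_compl_iff]
      tauto
    rw [this]
    exact hEc.inter hUo.isClosed_compl
  have hBcpt : IsCompact B := hBc.isCompact
  have hdisj : Disjoint A B := disjoint_sdiff_self_right
  haveI : T4Space (OnePoint (EuclideanSpace ℝ (Fin m))) := by constructor
  obtain ⟨u, v, hu, hv, hAu, hBv, huv⟩ :=
    SeparatedNhds.of_isCompact_isCompact hAcpt hBcpt hdisj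
  have hcov : E ⊆ u ∪ v := by
    intro z hz
    by_cases hzA : z ∈ A
    · exact Or.inl (hAu hzA)
    · exact Or.inr (hBv ⟨hz, hzA⟩)
  have hne1 : (E ∩ u).Nonempty := ⟨(x : OnePoint (EuclideanSpace ℝ (Fin m))), hx,
    hAu (mem_image_of_mem _ hxV)⟩
  have hne2 : (E ∩ v).Nonempty := by
    refine ⟨∞, hinf, hBv ⟨hinf, ?_⟩⟩
    rintro ⟨y, -, hy⟩
    exact (OnePoint.coe_ne_infty y) hy
  obtain ⟨z, -, hz⟩ := hEconn.isPreconnected u v hu hv hcov hne1 hne2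
  exact (huv.ne_of_mem hz.1 hz.2) rfl
end
end

section
/- Let E be a closed connected subset of the one-point compactification of ℝ^m containing ∞, and let f : ℝ^m → ℝ^m be a continuous open mapping. Then the preimage f⁻¹(E ∩ ℝ^m) = {x ∈ ℝ^m : f(x) ∈ E} has no bounded connected component. -/
open Set Metric Filter Bornology Topology OnePoint

noncomputable section

/-- In a compact Hausdorff ambient set `B`, if the connected component of `x` in `B`
is contained in an open set `Ω`, then there is a compact set `K` that is open in `B`
(i.e. `K = B ∩ V` with `V` open), contains `x`, and is contained in `Ω`. -/
lemma exists_compact_clopenIn {X : Type*} [TopologicalSpace X] [T2Space X]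
    {B Ω : Set X} {x : X} (hB : IsCompact B) (hx : x ∈ B) (hΩ : IsOpen Ω)
    (hsub : connectedComponentIn B x ⊆ Ω) :
    ∃ K V, IsCompact K ∧ IsOpen V ∧ K = B ∩ V ∧ x ∈ K ∧ K ⊆ Ω := by
  haveI : CompactSpace B := isCompact_iff_compactSpace.mp hB
  set x₀ : B := ⟨x, hx⟩
  have hcc : connectedComponent x₀ = ⋂ s : { s : Set B // IsClopen s ∧ x₀ ∈ s }, s :=
    connectedComponent_eq_iInter_isClopen x₀
  have hccΩ : connectedComponent x₀ ⊆ Subtype.val ⁻¹' Ω := by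
    intro z hz
    have : (z : X) ∈ connectedComponentIn B x := by
      rw [connectedComponentIn_eq_image hx]
      exact mem_image_of_mem _ hz
    exact hsub this
  -- the closed set to avoid
  set T : Set B := Subtype.val ⁻¹' Ωᶜ with hT
  have hTc : IsClosed T := (hΩ.isClosed_compl).preimage continuous_subtype_val
  have hTcompact : IsCompact T := hTc.isCompact
  have hdisj : (T ∩ ⋂ s : { s : Set B // IsClopen s ∧ x₀ ∈ s }, (s : Set B)) = ∅ := by
    rw [← hcc]
    apply eq_empty_of_forall_notMem
    rintro z ⟨hz1, hz2⟩
    exact hz1 (hccΩ hz2)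
  obtain ⟨u, hu⟩ := hTcompact.elim_finite_subfamily_closed _
    (fun s : { s : Set B // IsClopen s ∧ x₀ ∈ s } => s.2.1.isClosed) hdisj
  set K₀ : Set B := ⋂ s ∈ u, (s : Set B) with hK₀
  have hK₀clopen : IsClopen K₀ := isClopen_biInter_finset fun s _ => s.2.1
  have hxK₀ : x₀ ∈ K₀ := mem_iInter₂.mpr fun s _ => s.2.2
  have hK₀Ω : K₀ ⊆ Subtype.val ⁻¹' Ω := by
    intro z hz
    by_contra h
    exact (eq_empty_iff_forall_notMem.mp hu z) ⟨h, hz⟩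
  -- K₀ is open in the subtype, hence comes from an open set
  obtain ⟨V, hV, hVK⟩ := isOpen_induced_iff.mp hK₀clopen.2
  refine ⟨Subtype.val '' K₀, V, ?_, hV, ?_, ⟨x₀, hxK₀, rfl⟩, ?_⟩
  · exact (hK₀clopen.1.isCompact).image continuous_subtype_val
  · rw [← hVK, Subtype.image_preimage_coe]
  · rintro _ ⟨z, hz, rfl⟩
    exact hK₀Ω hz

theorem preimage_no_bounded_component {m : ℕ}
    (E : Set (OnePoint (EuclideanSpace ℝ (Fin m))))
    (hEc : IsClosed E) (hEconn : IsConnected E)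
    (hinf : (∞ : OnePoint (EuclideanSpace ℝ (Fin m))) ∈ E)
    (f : EuclideanSpace ℝ (Fin m) → EuclideanSpace ℝ (Fin m))
    (hf : Continuous f) (hopen : IsOpenMap f)
    (x : EuclideanSpace ℝ (Fin m))
    (hx : x ∈ {y : EuclideanSpace ℝ (Fin m) | (f y : OnePoint (EuclideanSpace ℝ (Fin m))) ∈ E}) :
    ¬ IsBounded (connectedComponentIn
      {y : EuclideanSpace ℝ (Fin m) | (f y : OnePoint (EuclideanSpace ℝ (Fin m))) ∈ E} x) := by
  set A : Set (EuclideanSpace ℝ (Fin m)) :=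
    {y : EuclideanSpace ℝ (Fin m) | (f y : OnePoint (EuclideanSpace ℝ (Fin m))) ∈ E} with hA
  have hAclosed : IsClosed A := hEc.preimage (continuous_coe.comp hf)
  intro hb
  -- choose a ball containing the component
  obtain ⟨r, hr⟩ := hb.subset_closedBall 0
  set R : ℝ := |r| + 1 with hR
  have hCball : connectedComponentIn A x ⊆ ball 0 R := by
    refine hr.trans (closedBall_subset_ball ?_)
    calc r ≤ |r| := le_abs_self r
    _ < |r| + 1 := by linarith
  set B : Set (EuclideanSpace ℝ (Fin m)) := A ∩ closedBall 0 R with hB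
  have hBcompact : IsCompact B := (isCompact_closedBall 0 R).inter_left hAclosed
  have hxC : x ∈ connectedComponentIn A x := mem_connectedComponentIn hx
  have hxB : x ∈ B := ⟨hx, ball_subset_closedBall (hCball hxC)⟩
  have hsub : connectedComponentIn B x ⊆ ball 0 R :=
    (connectedComponentIn_mono x inter_subset_left).trans hCball
  obtain ⟨K, V, hKcompact, hVopen, hKV, hxK, hKball⟩ :=
    exists_compact_clopenIn hBcompact hxB isOpen_ball hsub
  -- K is open in A
  set W : Set (EuclideanSpace ℝ (Fin m)) := V ∩ ball 0 R with hW
  have hWopen : IsOpen W := hVopen.inter isOpen_ball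
  have hKA : K = A ∩ W := by
    apply Subset.antisymm
    · intro z hz
      rw [hKV] at hz
      exact ⟨hz.1.1, hz.2, hKball (by rw [hKV]; exact hz)⟩
    · rintro z ⟨hzA, hzV, hzball⟩
      rw [hKV]
      exact ⟨⟨hzA, ball_subset_closedBall hzball⟩, hzV⟩
  have hKW : K ⊆ W := by rw [hKA]; exact inter_subset_right
  -- find an open set U with K ⊆ U, closure U ⊆ W, closure U compact
  obtain ⟨U, hUopen, hKU, hUW, hUcompact⟩ :=
    exists_open_between_and_isCompact_closure hKcompact hWopen hKW
  -- frontier U misses A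
  have hfront : frontier U ∩ A = ∅ := by
    apply eq_empty_of_forall_notMem
    rintro z ⟨hzf, hzA⟩
    have hzW : z ∈ W := hUW hzf.1
    have hzK : z ∈ K := by rw [hKA]; exact ⟨hzA, hzW⟩
    exact hzf.2 (by rw [hUopen.interior_eq]; exact hKU hzK)
  haveI : WeaklyLocallyCompactSpace (EuclideanSpace ℝ (Fin m)) := inferInstance
  haveI : T4Space (OnePoint (EuclideanSpace ℝ (Fin m))) := ⟨⟩
  -- now separate E
  set ι : EuclideanSpace ℝ (Fin m) → OnePoint (EuclideanSpace ℝ (Fin m)) := (↑)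
  set V₁ : Set (OnePoint (EuclideanSpace ℝ (Fin m))) := ι '' (f '' U) with hV₁def
  set V₂ : Set (OnePoint (EuclideanSpace ℝ (Fin m))) := (ι '' (f '' closure U))ᶜ with hV₂def
  have hV₁open : IsOpen V₁ := isOpenEmbedding_coe.isOpenMap _ (hopen U hUopen)
  have hV₂open : IsOpen V₂ :=
    (((hUcompact.image hf).image continuous_coe).isClosed).isOpen_compl
  have hcover : E ⊆ V₁ ∪ V₂ := by
    intro e he
    by_cases hcase : e ∈ ι '' (f '' closure U)
    · left
      obtain ⟨y, ⟨z, hz, rfl⟩, rfl⟩ := hcase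
      have hzA : z ∈ A := he
      rcases (closure_eq_self_union_frontier U ▸ hz : z ∈ U ∪ frontier U) with h | h
      · exact ⟨f z, ⟨z, h, rfl⟩, rfl⟩
      · exact absurd ⟨h, hzA⟩ (eq_empty_iff_forall_notMem.mp hfront z)
    · exact Or.inr hcase
  have hne₁ : (E ∩ V₁).Nonempty := ⟨ι (f x), hx, ⟨f x, ⟨x, hKU hxK, rfl⟩, rfl⟩⟩
  have hne₂ : (E ∩ V₂).Nonempty := ⟨∞, hinf, infty_notMem_image_coe⟩
  obtain ⟨e, _, he₁, he₂⟩ := hEconn.isPreconnected V₁ V₂ hV₁open hV₂open hcover hne₁ hne₂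
  exact he₂ (image_mono (image_mono subset_closure) he₁)
end
end

section
/- Suppose for every R > R₀ there is a sequence r_n → ∞ with B(0, r_n) ⊆ T(f^n(B(0, R))). Then for any R' > R > R₀, the set A(f) defined via radius R equals the set defined via radius R', where A(f) = {x : ∃ L ∈ ℕ, ∀ n ∈ ℕ, f^{n+L}(x) ∉ T(f^n(B(0,R)))}. -/
open Set Metric Filter Bornology Topology

noncomputable section

/-- The covering property (1a): for each `R > R₀` there exist `r_n → ∞` with
`B(0, r_n) ⊆ T(f^n(B(0,R)))`. -/
def CoveringProperty {m : ℕ} (f : EuclideanSpace ℝ (Fin m) → EuclideanSpace ℝ (Fin m))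
    (R₀ : ℝ) : Prop :=
  ∀ R > R₀, ∃ r : ℕ → ℝ, Tendsto r atTop atTop ∧
    ∀ n : ℕ, ball (0 : EuclideanSpace ℝ (Fin m)) (r n) ⊆ topHull (f^[n] '' ball 0 R)

/-- The fast escaping set defined via radius `R`:
`A(f) = {x : ∃ L, ∀ n, f^{n+L}(x) ∉ T(f^n(B(0,R)))}`. -/
def fastEscaping {m : ℕ} (f : EuclideanSpace ℝ (Fin m) → EuclideanSpace ℝ (Fin m))
    (R : ℝ) : Set (EuclideanSpace ℝ (Fin m)) :=
  {x | ∃ L : ℕ, ∀ n : ℕ, f^[n + L] x ∉ topHull (f^[n] '' ball (0 : EuclideanSpace ℝ (Fin m)) R)}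

section Aux

variable {m : ℕ}

lemma subset_topHull (E : Set (EuclideanSpace ℝ (Fin m))) : E ⊆ topHull E :=
  subset_union_left

lemma topHull_mono {E F : Set (EuclideanSpace ℝ (Fin m))} (h : E ⊆ F) :
    topHull E ⊆ topHull F := by
  rintro x (hx | hx)
  · exact subset_topHull F (h hx)
  · by_cases hxF : x ∈ F
    · exact Or.inl hxF
    · have hx' : IsBounded (connectedComponentIn Eᶜ x) := hx
      exact Or.inr (hx'.subset (connectedComponentIn_mono x (compl_subset_compl.2 h)))

lemma topHull_topHull (E : Set (EuclideanSpace ℝ (Fin m))) :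
    topHull (topHull E) ⊆ topHull E := by
  intro x hx
  by_contra hxE
  have hxE' : x ∉ E := fun h => hxE (subset_topHull E h)
  have hxc : x ∈ Eᶜ := hxE'
  have hCub : ¬ IsBounded (connectedComponentIn Eᶜ x) := fun hb => hxE (Or.inr hb)
  have hCsub : connectedComponentIn Eᶜ x ⊆ (topHull E)ᶜ := by
    intro y hy
    rintro (hyE | hyB)
    · exact (connectedComponentIn_subset Eᶜ x hy) hyE
    · exact hCub (by rwa [connectedComponentIn_eq hy])
  rcases hx with hx | hx
  · exact hxE hx
  · have hx' : IsBounded (connectedComponentIn (topHull E)ᶜ x) := hx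
    exact hCub (hx'.subset
      (isPreconnected_connectedComponentIn.subset_connectedComponentIn
        (mem_connectedComponentIn hxc) hCsub))

lemma topHull_subset_of_subset_topHull {A B : Set (EuclideanSpace ℝ (Fin m))}
    (h : A ⊆ topHull B) : topHull A ⊆ topHull B :=
  (topHull_mono h).trans (topHull_topHull B)

lemma frontier_connectedComponentIn_subset {K : Set (EuclideanSpace ℝ (Fin m))}
    (hK : IsClosed K) (x : EuclideanSpace ℝ (Fin m)) :
    frontier (connectedComponentIn Kᶜ x) ⊆ K := by
  set U := connectedComponentIn Kᶜ x with hU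
  have hUo : IsOpen U := hK.isOpen_compl.connectedComponentIn
  intro y hy
  by_contra hyK
  have hyc : y ∈ Kᶜ := hyK
  set N := connectedComponentIn Kᶜ y with hN
  have hNo : IsOpen N := hK.isOpen_compl.connectedComponentIn
  have hyN : y ∈ N := mem_connectedComponentIn hyc
  have hyclU : y ∈ closure U := hy.1
  obtain ⟨z, hzN, hzU⟩ := mem_closure_iff.1 hyclU N hNo hyN
  have h1 : N = connectedComponentIn Kᶜ z := connectedComponentIn_eq hzN
  have h2 : U = connectedComponentIn Kᶜ z := connectedComponentIn_eq hzU
  have : y ∈ U := by rw [h2, ← h1]; exact hyN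
  exact hy.2 (by rwa [hUo.interior_eq])

lemma image_topHull_subset {f : EuclideanSpace ℝ (Fin m) → EuclideanSpace ℝ (Fin m)}
    (hf : Continuous f) (hopen : IsOpenMap f) {K : Set (EuclideanSpace ℝ (Fin m))}
    (hK : IsClosed K) : f '' topHull K ⊆ topHull (f '' K) := by
  rintro _ ⟨x, hx, rfl⟩
  by_cases hfx : f x ∈ f '' K
  · exact subset_topHull _ hfx
  have hxK : x ∉ K := fun h => hfx (mem_image_of_mem f h)
  have hxB : IsBounded (connectedComponentIn Kᶜ x) := by
    rcases hx with hx | hx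
    · exact absurd hx hxK
    · exact hx
  set U := connectedComponentIn Kᶜ x with hUdef
  have hUo : IsOpen U := hK.isOpen_compl.connectedComponentIn
  have hxU : x ∈ U := mem_connectedComponentIn hxK
  have hclU : IsCompact (closure U) := hxB.isCompact_closure
  have hfclU : IsCompact (f '' closure U) := hclU.image hf
  refine Or.inr ?_
  set V := connectedComponentIn (f '' K)ᶜ (f x) with hVdef
  have hVpre : IsPreconnected V := isPreconnected_connectedComponentIn
  have hfxV : f x ∈ V := mem_connectedComponentIn hfx
  have hu : IsOpen (f '' U) := hopen U hUo
  have hw : IsOpen (f '' closure U)ᶜ := hfclU.isClosed.isOpen_compl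
  have hcover : V ⊆ f '' U ∪ (f '' closure U)ᶜ := by
    intro z hz
    by_cases hzc : z ∈ f '' closure U
    · left
      obtain ⟨y, hy, rfl⟩ := hzc
      rw [closure_eq_self_union_frontier] at hy
      rcases hy with hy | hy
      · exact mem_image_of_mem f hy
      · exact absurd (mem_image_of_mem f (frontier_connectedComponentIn_subset hK x hy))
          (connectedComponentIn_subset _ _ hz)
    · exact Or.inr hzc
  have hVsub : V ⊆ f '' U := by
    intro z hz
    by_contra hzu
    have hzw : z ∈ (f '' closure U)ᶜ := by
      rcases hcover hz with h | h
      · exact absurd h hzu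
      · exact h
    obtain ⟨t, _, htu, htw⟩ := hVpre (f '' U) (f '' closure U)ᶜ hu hw hcover
      ⟨f x, hfxV, mem_image_of_mem f hxU⟩ ⟨z, hz, hzw⟩
    exact htw (image_mono subset_closure htu)
  exact (hfclU.isBounded.subset (image_mono subset_closure)).subset hVsub

lemma isClosed_iterate_image_closedBall
    {f : EuclideanSpace ℝ (Fin m) → EuclideanSpace ℝ (Fin m)} (hf : Continuous f)
    (n : ℕ) (c : EuclideanSpace ℝ (Fin m)) (ρ : ℝ) :
    IsClosed (f^[n] '' closedBall c ρ) :=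
  ((isCompact_closedBall c ρ).image (hf.iterate n)).isClosed

end Aux

theorem fastEscaping_indep_of_radius {m : ℕ}
    (f : EuclideanSpace ℝ (Fin m) → EuclideanSpace ℝ (Fin m))
    (hf : Continuous f) (hopen : IsOpenMap f)
    (R₀ : ℝ) (hcov : CoveringProperty f R₀)
    (R R' : ℝ) (hR : R₀ < R) (hRR' : R < R') :
    fastEscaping f R = fastEscaping f R' := by
  set R₁ : ℝ := (R₀ + R) / 2 with hR₁def
  have hR₁₀ : R₀ < R₁ := by rw [hR₁def]; linarith
  have hR₁R : R₁ < R := by rw [hR₁def]; linarith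
  obtain ⟨r, hrt, hrsub⟩ := hcov R₁ hR₁₀
  obtain ⟨k, hk⟩ := (hrt.eventually_ge_atTop (R' + 1)).exists
  -- key induction: f^[n] '' closedBall 0 R' ⊆ topHull (f^[n+k] '' closedBall 0 R₁)
  have key : ∀ n : ℕ, f^[n] '' closedBall (0 : EuclideanSpace ℝ (Fin m)) R' ⊆
      topHull (f^[n + k] '' closedBall (0 : EuclideanSpace ℝ (Fin m)) R₁) := by
    intro n
    induction n with
    | zero =>
      simp only [Function.iterate_zero, image_id, Nat.zero_add]
      calc closedBall (0 : EuclideanSpace ℝ (Fin m)) R'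
          ⊆ ball 0 (r k) := closedBall_subset_ball (by linarith)
        _ ⊆ topHull (f^[k] '' ball 0 R₁) := hrsub k
        _ ⊆ topHull (f^[k] '' closedBall 0 R₁) :=
            topHull_mono (image_mono ball_subset_closedBall)
    | succ n ih =>
      have h1 : f^[n + 1] '' closedBall (0 : EuclideanSpace ℝ (Fin m)) R' =
          f '' (f^[n] '' closedBall 0 R') := by
        rw [Function.iterate_succ', Set.image_comp]
      have h2 : f^[n + 1 + k] '' closedBall (0 : EuclideanSpace ℝ (Fin m)) R₁ =
          f '' (f^[n + k] '' closedBall 0 R₁) := by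
        rw [show n + 1 + k = (n + k) + 1 from by omega, Function.iterate_succ', Set.image_comp]
      rw [h1, h2]
      calc f '' (f^[n] '' closedBall (0 : EuclideanSpace ℝ (Fin m)) R')
          ⊆ f '' topHull (f^[n + k] '' closedBall 0 R₁) := image_mono ih
        _ ⊆ topHull (f '' (f^[n + k] '' closedBall 0 R₁)) :=
            image_topHull_subset hf hopen (isClosed_iterate_image_closedBall hf _ _ _)
  -- hull inclusion with uniform shift k
  have incl : ∀ n : ℕ, topHull (f^[n] '' ball (0 : EuclideanSpace ℝ (Fin m)) R') ⊆
      topHull (f^[n + k] '' ball (0 : EuclideanSpace ℝ (Fin m)) R) := by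
    intro n
    calc topHull (f^[n] '' ball (0 : EuclideanSpace ℝ (Fin m)) R')
        ⊆ topHull (f^[n] '' closedBall 0 R') :=
          topHull_mono (image_mono ball_subset_closedBall)
      _ ⊆ topHull (f^[n + k] '' closedBall 0 R₁) := topHull_subset_of_subset_topHull (key n)
      _ ⊆ topHull (f^[n + k] '' ball 0 R) :=
          topHull_mono (image_mono (closedBall_subset_ball hR₁R))
  ext x
  constructor
  · rintro ⟨L, hL⟩
    refine ⟨L + k, fun n hmem => hL (n + k) ?_⟩
    have := incl n hmem
    rwa [show n + (L + k) = n + k + L from by omega] at this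
  · rintro ⟨L, hL⟩
    exact ⟨L, fun n hmem =>
      hL n (topHull_mono (image_mono (ball_subset_ball hRR'.le)) hmem)⟩
end
end

section
/- Let 0 < ρ < 1, r₁ > 1 and r_n = r₁^{2^{n-1}}. The set A = ⋃_{n≥1} [r_n^{1+ρ}, r_n²] has lower logarithmic density at least (1−ρ)/(1+ρ), i.e., liminf_{r→∞} (1/log r) ∫_{A ∩ [1,r]} dt/t ≥ (1−ρ)/(1+ρ). -/
open Set Filter MeasureTheory

noncomputable section

lemma int_Icc_one_div {a b : ℝ} (ha : 1 ≤ a) (hab : a ≤ b) :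
    ∫ t in Icc a b, 1 / t = Real.log b - Real.log a := by
  have h0 : (0:ℝ) ∉ uIcc a b := by
    rw [Set.uIcc_of_le hab]; intro h; exact absurd h.1 (by linarith)
  rw [MeasureTheory.integral_Icc_eq_integral_Ioc, ← intervalIntegral.integral_of_le hab,
    integral_one_div h0, Real.log_div (by linarith) (by linarith)]

lemma intOn_one_div (b : ℝ) : IntegrableOn (fun t : ℝ => 1 / t) (Icc (1:ℝ) b) := by
  apply ContinuousOn.integrableOn_Icc
  apply ContinuousOn.div continuousOn_const continuousOn_id
  intro x hx h; subst h; exact absurd hx.1 (by norm_num)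

lemma arith1 {ρ L u Q q : ℝ} (hρ0 : 0 < ρ) (hρ1 : ρ < 1) (hL : 0 < L)
    (hq0 : 0 < q) (hq1 : q ≤ 1) (hqQ : 1 ≤ q*Q) (hu : u ≤ (1+ρ)*Q*L) :
    (1-ρ)/(1+ρ)*(1-q)*u ≤ (1-ρ)*(Q-1)*L := by
  have hc : (1-ρ)/(1+ρ)*(1+ρ) = 1-ρ := div_mul_cancel₀ _ (by linarith)
  have hc0 : 0 ≤ (1-ρ)/(1+ρ) := div_nonneg (by linarith) (by linarith)
  have s1 : (1-ρ)/(1+ρ)*(1-q)*u ≤ (1-ρ)/(1+ρ)*(1-q)*((1+ρ)*Q*L) :=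
    mul_le_mul_of_nonneg_left hu (mul_nonneg hc0 (by linarith))
  have s2 : (1-ρ)/(1+ρ)*(1-q)*((1+ρ)*Q*L) = (1-ρ)*((1-q)*Q*L) := by
    rw [show (1-ρ)/(1+ρ)*(1-q)*((1+ρ)*Q*L) = ((1-ρ)/(1+ρ)*(1+ρ))*((1-q)*Q*L) by ring, hc]
  have s3 : (1-ρ)*((1-q)*Q*L) ≤ (1-ρ)*(Q-1)*L := by
    nlinarith [mul_nonneg (mul_nonneg (show (0:ℝ) ≤ 1-ρ by linarith) hL.le)
      (show (0:ℝ) ≤ q*Q - 1 by linarith)]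
  linarith

lemma arith2 {ρ L u Q q : ℝ} (hρ0 : 0 < ρ) (hρ1 : ρ < 1) (hL : 0 < L)
    (hq0 : 0 < q) (hq1 : q ≤ 1) (hqQ : 1 ≤ q*Q) (hu : (1+ρ)*Q*L ≤ u) :
    (1-ρ)/(1+ρ)*(1-q)*u ≤ (1-ρ)*(Q-1)*L + (u - (1+ρ)*Q*L) := by
  have hc : (1-ρ)/(1+ρ)*(1+ρ) = 1-ρ := div_mul_cancel₀ _ (by linarith)
  have hc0 : 0 ≤ (1-ρ)/(1+ρ) := div_nonneg (by linarith) (by linarith)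
  have hclt : (1-ρ)/(1+ρ) < 1 := by rw [div_lt_one (by linarith)]; linarith
  have h1 : 0 ≤ 1 - (1-ρ)/(1+ρ)*(1-q) := by nlinarith
  have s1 : (1 - (1-ρ)/(1+ρ)*(1-q)) * ((1+ρ)*Q*L) ≤ (1 - (1-ρ)/(1+ρ)*(1-q)) * u :=
    mul_le_mul_of_nonneg_left hu h1
  have s2 : (1-ρ)/(1+ρ)*(1-q)*((1+ρ)*Q*L) = (1-ρ)*((1-q)*Q*L) := by
    rw [show (1-ρ)/(1+ρ)*(1-q)*((1+ρ)*Q*L) = ((1-ρ)/(1+ρ)*(1+ρ))*((1-q)*Q*L) by ring, hc]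
  have s3 : (1-ρ)*((1-q)*Q*L) ≤ (1-ρ)*(Q-1)*L := by
    nlinarith [mul_nonneg (mul_nonneg (show (0:ℝ) ≤ 1-ρ by linarith) hL.le)
      (show (0:ℝ) ≤ q*Q - 1 by linarith)]
  nlinarith [s1, s2, s3]

theorem lower_log_density {ρ r₁ : ℝ} (hρ0 : 0 < ρ) (hρ1 : ρ < 1) (hr₁ : 1 < r₁)
    (r : ℕ → ℝ) (hr : ∀ n ≥ 1, r n = r₁ ^ (2 ^ (n - 1) : ℕ))
    (A : Set ℝ) (hA : A = ⋃ n ∈ Ici 1, Icc ((r n) ^ ((1 : ℝ) + ρ)) ((r n) ^ 2)) :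
    (1 - ρ) / (1 + ρ) ≤
      Filter.liminf (fun x : ℝ => (1 / Real.log x) * ∫ t in A ∩ Icc 1 x, 1 / t) atTop := by
  classical
  set L := Real.log r₁ with hLdef
  have hL : 0 < L := Real.log_pos hr₁
  have hr₁0 : (0:ℝ) < r₁ := by linarith
  set c : ℝ := (1 - ρ) / (1 + ρ) with hcdef
  set f : ℝ → ℝ := fun x => (1 / Real.log x) * ∫ t in A ∩ Icc 1 x, 1 / t with hfdef
  -- the intervals, reindexed
  set K : ℕ → Set ℝ := fun k => Icc (r₁ ^ (((1+ρ) * 2^k):ℝ)) (r₁ ^ (2^(k+1) : ℕ)) with hKdef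
  have hJK : ∀ k : ℕ, Icc ((r (k+1)) ^ ((1:ℝ) + ρ)) ((r (k+1)) ^ 2) = K k := by
    intro k
    rw [hr (k+1) (by omega)]
    simp only [Nat.add_sub_cancel, hKdef]
    rw [← pow_mul, show (2:ℕ)^(k+1) = 2^k*2 from pow_succ 2 k]
    congr 1
    rw [← Real.rpow_natCast r₁ (2^k), ← Real.rpow_mul hr₁0.le]
    congr 1; push_cast; ring
  have hKA : ∀ k : ℕ, K k ⊆ A := by
    intro k
    rw [hA, ← hJK k]
    exact subset_biUnion_of_mem (u := fun n => Icc ((r n) ^ ((1:ℝ)+ρ)) ((r n)^2))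
      (show k+1 ∈ Ici 1 from by simp)
  have hK1 : ∀ k : ℕ, (1:ℝ) ≤ r₁ ^ (((1+ρ) * 2^k):ℝ) := by
    intro k
    exact Real.one_le_rpow hr₁.le (by positivity)
  have hKle : ∀ k : ℕ, r₁ ^ (((1+ρ) * 2^k):ℝ) ≤ r₁ ^ (2^(k+1) : ℕ) := by
    intro k
    rw [← Real.rpow_natCast r₁ (2^(k+1))]
    apply Real.rpow_le_rpow_left_iff hr₁ |>.mpr
    push_cast
    rw [pow_succ]
    nlinarith [pow_pos (by norm_num : (0:ℝ) < 2) k]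
  have hKint : ∀ k : ℕ, ∫ t in K k, 1 / t = (1 - ρ) * 2^k * L := by
    intro k
    rw [hKdef]
    rw [int_Icc_one_div (hK1 k) (hKle k), Real.log_rpow hr₁0, Real.log_pow]
    push_cast
    rw [pow_succ]
    ring
  -- finite unions
  set B : ℕ → Set ℝ := fun M => ⋃ k ∈ Finset.range M, K k with hBdef
  have hBmeas : ∀ M, MeasurableSet (B M) := fun M =>
    (Finset.range M).measurableSet_biUnion (fun k _ => measurableSet_Icc)
  have hBsub : ∀ M, B M ⊆ Icc 1 (r₁ ^ (2^M : ℕ)) := by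
    intro M x hx
    simp only [hBdef, mem_iUnion, Finset.mem_range] at hx
    obtain ⟨k, hk, hxk⟩ := hx
    refine ⟨le_trans (hK1 k) hxk.1, le_trans hxk.2 ?_⟩
    exact pow_le_pow_right₀ hr₁.le (Nat.pow_le_pow_right (by norm_num) hk)
  have hBA : ∀ M, B M ⊆ A := by
    intro M x hx
    simp only [hBdef, mem_iUnion, Finset.mem_range] at hx
    obtain ⟨k, _, hxk⟩ := hx
    exact hKA k hxk
  have hBintOn : ∀ M, IntegrableOn (fun t : ℝ => 1 / t) (B M) :=
    fun M => (intOn_one_div _).mono_set (hBsub M)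
  have hKintOn : ∀ k, IntegrableOn (fun t : ℝ => 1 / t) (K k) := by
    intro k
    refine (intOn_one_div (r₁ ^ (2^(k+1) : ℕ))).mono_set ?_
    exact Icc_subset_Icc_left (hK1 k)
  have hdisj : ∀ M, Disjoint (K M) (B M) := by
    intro M
    rw [Set.disjoint_left]
    intro x hxK hxB
    have h1 := (hBsub M hxB).2
    have h2 := hxK.1
    have hlt : r₁ ^ (2^M : ℕ) < r₁ ^ (((1+ρ) * 2^M):ℝ) := by
      rw [← Real.rpow_natCast r₁ (2^M)]
      apply Real.rpow_lt_rpow_left_iff hr₁ |>.mpr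
      push_cast
      nlinarith [pow_pos (by norm_num : (0:ℝ) < 2) M]
    linarith
  have hBint : ∀ M, ∫ t in B M, 1 / t = (1 - ρ) * (2^M - 1) * L := by
    intro M
    induction M with
    | zero => simp [hBdef]
    | succ M ih =>
      have hun : B (M+1) = K M ∪ B M := by
        simp only [hBdef, Finset.range_add_one, Finset.set_biUnion_insert]
      rw [hun, MeasureTheory.setIntegral_union (hdisj M) (hBmeas M) (hKintOn M) (hBintOn M),
        hKint M, ih]
      push_cast
      rw [pow_succ]
      ring
  -- key pointwise estimate
  have hAmeas : MeasurableSet A := by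
    rw [hA]
    exact MeasurableSet.biUnion (to_countable _) (fun _ _ => measurableSet_Icc)
  have key : ∀ N : ℕ, ∀ x : ℝ, r₁ ^ ((2^N : ℕ)) ≤ x → c * (1 - (1/2)^N) ≤ f x := by
    intro N x hx
    have hx1 : (1:ℝ) < x := lt_of_lt_of_le (one_lt_pow₀ hr₁ (by positivity)) hx
    have hx0 : (0:ℝ) < x := by linarith
    set u := Real.log x with hudef
    have hu0 : 0 < u := Real.log_pos hx1
    have huN : (2:ℝ)^N * L ≤ u := by
      have h := Real.log_le_log (by positivity) hx
      rw [Real.log_pow] at h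
      push_cast at h
      linarith
    set P : ℕ → Prop := fun k => (2:ℝ)^k * L ≤ u with hPdef
    have hPN : P N := huN
    set Bd := ⌈u/L⌉₊ with hBddef
    have hNBd : N ≤ Bd := by
      have h1 : (N:ℝ) ≤ (2:ℝ)^N := by exact_mod_cast (Nat.lt_two_pow_self (n := N)).le
      have h2 : (2:ℝ)^N ≤ u / L := (le_div_iff₀ hL).mpr huN
      have h3 : u / L ≤ (Bd:ℝ) := Nat.le_ceil _
      exact_mod_cast (show (N:ℝ) ≤ (Bd:ℝ) by linarith)
    have hMBd : Nat.findGreatest P Bd < Bd := by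
      rcases lt_or_eq_of_le (Nat.findGreatest_le (P := P) Bd) with h|h
      · exact h
      · exfalso
        have hPBd : P Bd := h ▸ Nat.findGreatest_spec hNBd hPN
        have h1 : u ≤ (Bd:ℝ) * L := by
          have h4 : u / L ≤ (Bd:ℝ) := Nat.le_ceil _
          calc u = (u / L) * L := by field_simp
            _ ≤ (Bd:ℝ) * L := mul_le_mul_of_nonneg_right h4 hL.le
        have h2 : (Bd:ℝ) + 1 ≤ (2:ℝ)^Bd := by exact_mod_cast Nat.lt_two_pow_self (n := Bd)
        have h3 : ((Bd:ℝ) + 1) * L ≤ (2:ℝ)^Bd * L := mul_le_mul_of_nonneg_right h2 hL.le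
        have h5 : (2:ℝ)^Bd * L ≤ u := hPBd
        nlinarith
    obtain ⟨M, hNM, hPM, hnotP⟩ : ∃ M : ℕ, N ≤ M ∧ P M ∧ ¬ P (M+1) :=
      ⟨Nat.findGreatest P Bd, Nat.le_findGreatest hNBd hPN,
        Nat.findGreatest_spec hNBd hPN,
        Nat.findGreatest_is_greatest (Nat.lt_succ_self _) (by omega)⟩
    have hQLu : (2:ℝ)^M * L ≤ u := hPM
    have hu2 : u < (2:ℝ)^(M+1) * L := by
      simp only [hPdef, not_le] at hnotP
      exact hnotP
    have hQ1 : (1:ℝ) ≤ (2:ℝ)^M := one_le_pow₀ (by norm_num)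
    have hQN : (2:ℝ)^N ≤ (2:ℝ)^M := pow_le_pow_right₀ (by norm_num) hNM
    have hq0 : (0:ℝ) < (1/2:ℝ)^N := by positivity
    have hq1 : ((1/2:ℝ))^N ≤ 1 := pow_le_one₀ (by norm_num) (by norm_num)
    have hqQ : (1:ℝ) ≤ (1/2:ℝ)^N * (2:ℝ)^M := by
      have h1 : ((1/2:ℝ))^N * (2:ℝ)^N = 1 := by rw [← mul_pow]; norm_num
      calc (1:ℝ) = (1/2:ℝ)^N * (2:ℝ)^N := h1.symm
        _ ≤ (1/2:ℝ)^N * (2:ℝ)^M := mul_le_mul_of_nonneg_left hQN hq0.le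
    have hxM : r₁ ^ (2^M : ℕ) ≤ x := by
      rw [← Real.exp_log hx0, ← Real.exp_log (show (0:ℝ) < r₁^(2^M:ℕ) by positivity)]
      apply Real.exp_le_exp.mpr
      rw [Real.log_pow]
      push_cast
      exact hQLu
    have hIntA : IntegrableOn (fun t:ℝ => 1/t) (A ∩ Icc 1 x) :=
      (intOn_one_div x).mono_set inter_subset_right
    have hnonneg : 0 ≤ᶠ[ae (volume.restrict (A ∩ Icc 1 x))] (fun t:ℝ => 1/t) := by
      filter_upwards [ae_restrict_mem (hAmeas.inter measurableSet_Icc)] with t ht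
      have h1t := ht.2.1
      positivity
    have hmono : ∀ s : Set ℝ, s ⊆ A ∩ Icc 1 x →
        (∫ t in s, 1/t) ≤ ∫ t in A ∩ Icc 1 x, 1/t := fun s hs =>
      MeasureTheory.setIntegral_mono_set hIntA hnonneg (HasSubset.Subset.eventuallyLE hs)
    have hBsubx : B M ⊆ A ∩ Icc 1 x := by
      intro y hy
      exact ⟨hBA M hy, (hBsub M hy).1, le_trans (hBsub M hy).2 hxM⟩
    have hmain : c * (1 - (1/2)^N) * u ≤ ∫ t in A ∩ Icc 1 x, 1/t := by
      by_cases hcase : u ≤ (1+ρ)*(2:ℝ)^M*L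
      · have h1 := hmono _ hBsubx
        rw [hBint M] at h1
        have h2 := arith1 (u := u) (Q := (2:ℝ)^M) (q := (1/2:ℝ)^N)
          hρ0 hρ1 hL hq0 hq1 hqQ hcase
        rw [hcdef]
        linarith
      · push_neg at hcase
        have ha1 : (1:ℝ) ≤ r₁ ^ (((1+ρ) * 2^M):ℝ) := Real.one_le_rpow hr₁.le (by positivity)
        have hloga : Real.log (r₁ ^ (((1+ρ) * 2^M):ℝ)) = (1+ρ)*(2:ℝ)^M*L := by
          rw [Real.log_rpow hr₁0]
        have ha0 : (0:ℝ) < r₁ ^ (((1+ρ) * 2^M):ℝ) := by linarith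
        have hax : r₁ ^ (((1+ρ) * 2^M):ℝ) ≤ x := by
          rw [← Real.exp_log hx0, ← Real.exp_log ha0]
          exact Real.exp_le_exp.mpr (by rw [hloga]; linarith)
        have hxM2 : x ≤ r₁ ^ (2^(M+1) : ℕ) := by
          rw [← Real.exp_log hx0,
            ← Real.exp_log (show (0:ℝ) < r₁^(2^(M+1):ℕ) by positivity)]
          apply Real.exp_le_exp.mpr
          rw [Real.log_pow]
          push_cast
          linarith
        have hsub2 : Icc (r₁ ^ (((1+ρ) * 2^M):ℝ)) x ⊆ A ∩ Icc 1 x := by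
          intro y hy
          refine ⟨hKA M ⟨hy.1, le_trans hy.2 hxM2⟩, le_trans ha1 hy.1, hy.2⟩
        have hdisj2 : Disjoint (B M) (Icc (r₁ ^ (((1+ρ) * 2^M):ℝ)) x) := by
          rw [Set.disjoint_left]
          intro y hyB hyI
          have h1 := (hBsub M hyB).2
          have h2 := hyI.1
          have hlt : r₁ ^ (2^M : ℕ) < r₁ ^ (((1+ρ) * 2^M):ℝ) := by
            rw [← Real.rpow_natCast r₁ (2^M)]
            apply Real.rpow_lt_rpow_left_iff hr₁ |>.mpr
            push_cast
            nlinarith [pow_pos (show (0:ℝ) < 2 by norm_num) M]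
          linarith
        have h1 := hmono _ (union_subset hBsubx hsub2)
        rw [MeasureTheory.setIntegral_union hdisj2 measurableSet_Icc (hBintOn M)
          ((intOn_one_div x).mono_set (Icc_subset_Icc_left ha1)), hBint M,
          int_Icc_one_div ha1 hax, hloga, ← hudef] at h1
        have h2 := arith2 (u := u) (Q := (2:ℝ)^M) (q := (1/2:ℝ)^N)
          hρ0 hρ1 hL hq0 hq1 hqQ hcase.le
        rw [hcdef]
        linarith
    rw [hfdef]
    calc c * (1 - (1/2)^N) = (1/u) * (c * (1 - (1/2)^N) * u) := by field_simp
      _ ≤ (1 / Real.log x) * ∫ t in A ∩ Icc 1 x, 1 / t := by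
          rw [← hudef]
          exact mul_le_mul_of_nonneg_left hmain (by positivity)
  -- upper bound, for coboundedness
  have hub : ∀ᶠ x in atTop, f x ≤ 1 := by
    filter_upwards [eventually_gt_atTop (1:ℝ)] with x hx
    have hlog : 0 < Real.log x := Real.log_pos hx
    have hint : ∫ t in A ∩ Icc 1 x, 1 / t ≤ Real.log x := by
      have h1 : ∫ t in Icc (1:ℝ) x, 1 / t = Real.log x := by
        rw [int_Icc_one_div le_rfl hx.le, Real.log_one, sub_zero]
      rw [← h1]
      apply MeasureTheory.setIntegral_mono_set (intOn_one_div x)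
      · filter_upwards [ae_restrict_mem measurableSet_Icc] with t ht
        have h1t := ht.1
        positivity
      · exact HasSubset.Subset.eventuallyLE inter_subset_right
    rw [hfdef]
    calc (1 / Real.log x) * ∫ t in A ∩ Icc 1 x, 1 / t
        ≤ (1 / Real.log x) * Real.log x := by
          apply mul_le_mul_of_nonneg_left hint (by positivity)
      _ = 1 := by field_simp
  have hcobdd : IsCoboundedUnder (· ≥ ·) atTop f :=
    IsBoundedUnder.isCoboundedUnder_ge ⟨1, hub⟩
  have hstep : ∀ N : ℕ, c * (1 - (1/2)^N) ≤ liminf f atTop := by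
    intro N
    apply Filter.le_liminf_of_le hcobdd
    filter_upwards [eventually_ge_atTop (r₁ ^ ((2^N : ℕ)))] with x hx
    exact key N x hx
  have htend : Tendsto (fun N : ℕ => c * (1 - (1/2:ℝ)^N)) atTop (nhds c) := by
    have h0 : Tendsto (fun N : ℕ => ((1:ℝ)/2)^N) atTop (nhds 0) :=
      tendsto_pow_atTop_nhds_zero_of_lt_one (by norm_num) (by norm_num)
    have := (h0.const_sub 1).const_mul c
    simpa using this
  exact le_of_tendsto' htend hstep
end
end
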